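/- arXiv:1811.12472 — 2 statements merged into one kernel-verified Lean document; each statement's English description precedes it below -/
import Mathlib

section
/- Let d ≥ 1 and let f : ℝᵈ → ℝᵈ be a C¹ diffeomorphism (f is a bijection and both f and f^{-1} are continuously differentiable). Let p ∈ ℝᵈ be a fixed point of f with |det(Df(p))| > 1, where Df(p) is the derivative of f at p. Then for every compact set K ⊆ ℝᵈ, the set of points x ∈ ℝᵈ such that fⁿ(x) ∈ K for all n ≥ 0 and the empirical measures e_n(x) := (1/n)·∑_{i=0}^{n-1} δ_{f^i(x)} converge weakly to the Dirac measure δ_p (i.e. (1/n)·∑_{i=0}^{n-1} g(f^i(x)) → g(p) for every bounded continuous g : ℝᵈ → ℝ) has Lebesgue measure zero. In particular, δ_p is not a physical measure of f restricted to orbits remaining in a compact set. -/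
open MeasureTheory Filter Topology

/-- Let `f : ℝᵈ → ℝᵈ` be a `C¹` diffeomorphism (with `C¹` inverse `finv`),
and `p` a fixed point with `|det Df(p)| > 1`. Then for every compact set `K`, the set of
points `x` whose forward orbit stays in `K` and whose empirical measures converge weakly to
the Dirac measure `δ_p` (tested against bounded continuous functions) has Lebesgue measure
zero. In particular `δ_p` is not a physical measure on orbits remaining in a compact set. -/
theorem dirac_not_physical_of_det_gt_one
    (d : ℕ) (hd : 1 ≤ d)
    (f finv : (Fin d → ℝ) → (Fin d → ℝ))
    (hleft : Function.LeftInverse finv f) (hright : Function.RightInverse finv f)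
    (hf : ContDiff ℝ 1 f) (hfinv : ContDiff ℝ 1 finv)
    (p : Fin d → ℝ) (hp : f p = p)
    (hdet : 1 < |LinearMap.det (↑(fderiv ℝ f p) : (Fin d → ℝ) →ₗ[ℝ] (Fin d → ℝ))|)
    (K : Set (Fin d → ℝ)) (hK : IsCompact K) :
    volume {x : Fin d → ℝ | (∀ n : ℕ, f^[n] x ∈ K) ∧
      ∀ g : (Fin d → ℝ) → ℝ, Continuous g → (∃ C : ℝ, ∀ y, |g y| ≤ C) →
        Tendsto (fun n : ℕ => (n : ℝ)⁻¹ * ∑ i ∈ Finset.range n, g (f^[i] x))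
          atTop (𝓝 (g p))} = 0 := by
  classical
  have hfd : Differentiable ℝ f := hf.differentiable one_ne_zero
  have hfinvd : Differentiable ℝ finv := hfinv.differentiable one_ne_zero
  -- the determinant of the derivative never vanishes
  have hdet_ne : ∀ y, (fderiv ℝ f y).det ≠ 0 := by
    intro y
    have hcomp : fderiv ℝ (finv ∘ f) y = (fderiv ℝ finv (f y)).comp (fderiv ℝ f y) :=
      fderiv_comp y (hfinvd (f y)) (hfd y)
    have hid : (finv ∘ f) = id := funext hleft
    rw [hid, fderiv_id] at hcomp
    have h1 : (1 : ℝ) = (fderiv ℝ finv (f y)).det * (fderiv ℝ f y).det := by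
      have := congrArg ContinuousLinearMap.det hcomp
      simpa [ContinuousLinearMap.det, ContinuousLinearMap.coe_comp, LinearMap.det_comp] using this
    intro h0
    rw [h0, mul_zero] at h1
    exact one_ne_zero h1
  -- the log-Jacobian
  set h : (Fin d → ℝ) → ℝ := fun y => Real.log |(fderiv ℝ f y).det| with hh
  have hcont : Continuous h := by
    have h1 : Continuous fun y => (fderiv ℝ f y).det :=
      ContinuousLinearMap.continuous_det.comp (hf.continuous_fderiv one_ne_zero)
    exact (h1.abs).log fun y => abs_ne_zero.2 (hdet_ne y)
  have hdetp : (1 : ℝ) < |(fderiv ℝ f p).det| := hdet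
  have hppos : 0 < h p := Real.log_pos hdetp
  -- truncate h to a bounded continuous function agreeing with h on K ∪ {p}
  set K' : Set (Fin d → ℝ) := K ∪ {p} with hK'
  have hK'c : IsCompact K' := hK.union isCompact_singleton
  obtain ⟨C, hC⟩ := hK'c.exists_bound_of_continuousOn hcont.continuousOn
  have hCabs : ∀ y ∈ K', |h y| ≤ C := by
    intro y hy; simpa [Real.norm_eq_abs] using hC y hy
  have hpK' : p ∈ K' := Or.inr rfl
  have hC0 : 0 ≤ C := le_trans (abs_nonneg _) (hCabs p hpK')
  set g0 : (Fin d → ℝ) → ℝ := fun y => max (-C) (min C (h y)) with hg0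
  have hg0cont : Continuous g0 := continuous_const.max (continuous_const.min hcont)
  have hg0bd : ∀ y, |g0 y| ≤ C := by
    intro y
    rw [abs_le]
    constructor
    · exact le_max_left _ _
    · exact max_le (neg_le_self hC0) (min_le_left _ _)
  have hg0eq : ∀ y ∈ K', g0 y = h y := by
    intro y hy
    have := abs_le.1 (hCabs y hy)
    simp [hg0, min_eq_right this.2, max_eq_right this.1]
  have hg0p : g0 p = h p := hg0eq p hpK'
  -- the superset S'
  set S' : Set (Fin d → ℝ) := {x | (∀ n : ℕ, f^[n] x ∈ K) ∧
      Tendsto (fun n : ℕ => (n : ℝ)⁻¹ * ∑ i ∈ Finset.range n, g0 (f^[i] x))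
        atTop (𝓝 (g0 p))} with hS'def
  have hsub : {x : Fin d → ℝ | (∀ n : ℕ, f^[n] x ∈ K) ∧
      ∀ g : (Fin d → ℝ) → ℝ, Continuous g → (∃ C : ℝ, ∀ y, |g y| ≤ C) →
        Tendsto (fun n : ℕ => (n : ℝ)⁻¹ * ∑ i ∈ Finset.range n, g (f^[i] x))
          atTop (𝓝 (g p))} ⊆ S' := by
    rintro x ⟨h1, h2⟩
    exact ⟨h1, h2 g0 hg0cont ⟨C, hg0bd⟩⟩
  -- iterates are C¹
  have hfn : ∀ n : ℕ, ContDiff ℝ 1 (f^[n]) := by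
    intro n
    induction n with
    | zero => simpa using contDiff_id
    | succ n ih => rw [Function.iterate_succ]; exact ih.comp hf
  have hitcont : ∀ n : ℕ, Continuous (f^[n]) := fun n => (hfn n).continuous
  -- measurability of S'
  have hS'meas : MeasurableSet S' := by
    have hA : MeasurableSet {x : Fin d → ℝ | ∀ n : ℕ, f^[n] x ∈ K} := by
      have : {x : Fin d → ℝ | ∀ n : ℕ, f^[n] x ∈ K} = ⋂ n : ℕ, f^[n] ⁻¹' K := by
        ext x; simp
      rw [this]
      exact MeasurableSet.iInter fun n =>
        hK.isClosed.measurableSet.preimage (hitcont n).measurable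
    have hB : MeasurableSet {x : Fin d → ℝ |
        Tendsto (fun n : ℕ => (n : ℝ)⁻¹ * ∑ i ∈ Finset.range n, g0 (f^[i] x))
          atTop (𝓝 (g0 p))} := by
      apply measurableSet_tendsto
      intro n
      exact (continuous_const.mul (continuous_finset_sum _ fun i _ =>
        hg0cont.comp (hitcont i))).measurable
    exact hA.inter hB
  refine measure_mono_null hsub ?_
  by_contra hpos
  -- chain rule for determinants
  have hchain : ∀ (n : ℕ) (x : Fin d → ℝ),
      (fderiv ℝ (f^[n]) x).det = ∏ i ∈ Finset.range n, (fderiv ℝ f (f^[i] x)).det := by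
    intro n
    induction n with
    | zero => intro x; simp [Function.iterate_zero, ContinuousLinearMap.det]
    | succ n ih =>
      intro x
      have hstep : f^[n + 1] = f ∘ f^[n] := Function.iterate_succ' f n
      have hcomp : fderiv ℝ (f ∘ f^[n]) x
          = (fderiv ℝ f (f^[n] x)).comp (fderiv ℝ (f^[n]) x) :=
        fderiv_comp x (hfd _) (((hfn n).differentiable one_ne_zero) x)
      rw [hstep, hcomp]
      have hdc : ((fderiv ℝ f (f^[n] x)).comp (fderiv ℝ (f^[n]) x)).det
          = (fderiv ℝ f (f^[n] x)).det * (fderiv ℝ (f^[n]) x).det := by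
        simp [ContinuousLinearMap.det, ContinuousLinearMap.coe_comp, LinearMap.det_comp]
      rw [hdc, ih x, Finset.prod_range_succ, mul_comm]
  -- the Jacobian as an exponential of Birkhoff sums
  have hjac : ∀ (n : ℕ) (x : Fin d → ℝ),
      |(fderiv ℝ (f^[n]) x).det| = Real.exp (∑ i ∈ Finset.range n, h (f^[i] x)) := by
    intro n x
    rw [hchain n x, Finset.abs_prod, Real.exp_sum]
    exact Finset.prod_congr rfl fun i _ =>
      (Real.exp_log (abs_pos.2 (hdet_ne _))).symm
  -- pointwise divergence on S'
  have hdiv : ∀ x ∈ S',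
      Tendsto (fun n : ℕ => ENNReal.ofReal |(fderiv ℝ (f^[n]) x).det|) atTop (𝓝 ⊤) := by
    intro x hx
    obtain ⟨horb, htend⟩ := hx
    have hgh : ∀ i : ℕ, g0 (f^[i] x) = h (f^[i] x) := fun i => hg0eq _ (Or.inl (horb i))
    have htend' : Tendsto (fun n : ℕ => (n : ℝ)⁻¹ * ∑ i ∈ Finset.range n, h (f^[i] x))
        atTop (𝓝 (h p)) := by
      rw [← hg0p]
      refine htend.congr fun n => ?_
      congr 1
      exact Finset.sum_congr rfl fun i _ => hgh i
    have hsum : Tendsto (fun n : ℕ => ∑ i ∈ Finset.range n, h (f^[i] x)) atTop atTop := by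
      have hhalf : 0 < h p / 2 := by linarith
      have hev : ∀ᶠ n : ℕ in atTop,
          h p / 2 ≤ (n : ℝ)⁻¹ * ∑ i ∈ Finset.range n, h (f^[i] x) :=
        htend'.eventually (eventually_ge_nhds (by linarith))
      have hev1 : ∀ᶠ n : ℕ in atTop, (1 : ℕ) ≤ n := eventually_ge_atTop 1
      refine tendsto_atTop_mono' atTop
        (f₁ := fun n : ℕ => (n : ℝ) * (h p / 2)) ?_
        ((tendsto_natCast_atTop_atTop).atTop_mul_const hhalf)
      filter_upwards [hev, hev1] with n hn hn1
      have hnpos : (0 : ℝ) < n := by exact_mod_cast hn1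
      have hmul := mul_le_mul_of_nonneg_left hn (le_of_lt hnpos)
      calc (n : ℝ) * (h p / 2) ≤ (n : ℝ) * ((n : ℝ)⁻¹ * ∑ i ∈ Finset.range n, h (f^[i] x)) :=
            hmul
        _ = ∑ i ∈ Finset.range n, h (f^[i] x) := by
            rw [← mul_assoc, mul_inv_cancel₀ (ne_of_gt hnpos), one_mul]
    have hexp : Tendsto (fun n : ℕ => |(fderiv ℝ (f^[n]) x).det|) atTop atTop := by
      simp only [hjac]
      exact Real.tendsto_exp_atTop.comp hsum
    exact ENNReal.tendsto_ofReal_atTop.comp hexp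
  -- measurability of the Jacobian integrands
  have hmeasn : ∀ n : ℕ,
      Measurable fun x => ENNReal.ofReal |(fderiv ℝ (f^[n]) x).det| := by
    intro n
    exact ENNReal.measurable_ofReal.comp
      ((continuous_abs.comp (ContinuousLinearMap.continuous_det.comp
        ((hfn n).continuous_fderiv one_ne_zero))).measurable)
  -- change of variables: the integral of the Jacobian is the measure of the image
  have hinj : Function.Injective f := hleft.injective
  have hcov : ∀ n : ℕ,
      (∫⁻ x in S', ENNReal.ofReal |(fderiv ℝ (f^[n]) x).det|) ≤ volume K := by
    intro n
    have heq := lintegral_abs_det_fderiv_eq_addHaar_image volume hS'meas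
      (f' := fun x => fderiv ℝ (f^[n]) x) (f := f^[n])
      (fun x _ => (((hfn n).differentiable one_ne_zero) x).hasFDerivAt.hasFDerivWithinAt)
      ((hinj.iterate n).injOn)
    rw [heq]
    refine measure_mono ?_
    rintro y ⟨x, hx, rfl⟩
    exact hx.1 n
  -- Fatou's lemma gives a contradiction
  have hfatou := lintegral_liminf_le (μ := volume.restrict S') (u := atTop) hmeasn
  have hlhs : (∫⁻ x in S', liminf (fun n : ℕ =>
      ENNReal.ofReal |(fderiv ℝ (f^[n]) x).det|) atTop) = ⊤ := by
    have : (∫⁻ x in S', liminf (fun n : ℕ =>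
        ENNReal.ofReal |(fderiv ℝ (f^[n]) x).det|) atTop)
        = ∫⁻ _ in S', (⊤ : ENNReal) := by
      refine setLIntegral_congr_fun hS'meas (fun x hx => ?_)
      exact (hdiv x hx).liminf_eq
    rw [this, setLIntegral_const, ENNReal.top_mul hpos]
  have hrhs : liminf (fun n : ℕ =>
      ∫⁻ x in S', ENNReal.ofReal |(fderiv ℝ (f^[n]) x).det|) atTop ≤ volume K := by
    calc liminf (fun n : ℕ =>
        ∫⁻ x in S', ENNReal.ofReal |(fderiv ℝ (f^[n]) x).det|) atTop
        ≤ liminf (fun _ : ℕ => volume K) atTop :=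
          liminf_le_liminf (Eventually.of_forall hcov)
      _ = volume K := liminf_const _
  rw [hlhs] at hfatou
  exact absurd (top_le_iff.1 (hfatou.trans hrhs)) hK.measure_lt_top.ne
end

section
/- Let X be a compact metric space and φ : ℝ × X → X a continuous flow (φ(0,·) = id and φ(s+t,·) = φ(s, φ(t, ·)) for all s,t ∈ ℝ). Fix t₀ > 0. Let ν be a Borel probability measure on X invariant under the time-t₀ map (i.e. (φ_{t₀})_*ν = ν, where φ_{t₀} := φ(t₀,·)), and define the Borel probability measure μ by μ(A) := (1/t₀)·∫₀^{t₀} ν(φ_s^{-1}(A)) ds for every Borel set A ⊆ X. If μ is ergodic for the map φ_{t₀}, then (φ_s)_*ν = μ for every s ∈ ℝ; in particular ν = μ. -/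
open MeasureTheory Filter Topology
open scoped ENNReal NNReal

private lemma cont_integrable {X : Type*} [MetricSpace X] [CompactSpace X] [MeasurableSpace X]
    [BorelSpace X] (m : Measure X) [IsFiniteMeasure m] {h : X → ℝ} (hh : Continuous h) :
    Integrable h m := by
  have := hh.continuousOn.integrableOn_compact (μ := m) (isCompact_univ (X := X))
  rwa [IntegrableOn, Measure.restrict_univ] at this

private lemma flow_aux
    {X : Type*} [MetricSpace X] [CompactSpace X] [MeasurableSpace X] [BorelSpace X]
    (φ : ℝ → X → X) (hφcont : Continuous fun p : ℝ × X => φ p.1 p.2)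
    (hadd : ∀ s t : ℝ, ∀ x, φ (s + t) x = φ s (φ t x))
    (t₀ : ℝ) (ht₀ : 0 < t₀)
    (ν : Measure X) [IsProbabilityMeasure ν]
    (hν : Measure.map (φ t₀) ν = ν)
    (μ : Measure X) [IsProbabilityMeasure μ]
    (hμ : ∀ A : Set X, MeasurableSet A →
      μ A = ENNReal.ofReal (1 / t₀) * ∫⁻ s in Set.Ioc (0 : ℝ) t₀, ν (φ s ⁻¹' A))
    (herg : ∀ A : Set X, MeasurableSet A → φ t₀ ⁻¹' A = A → μ A = 0 ∨ μ A = 1)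
    (f : X → ℝ) (hf : Continuous f) :
    ∀ s : ℝ, ∫ x, f (φ s x) ∂ν = ∫ x, f x ∂μ := by
  classical
  have hφc : ∀ s : ℝ, Continuous (φ s) := fun s =>
    hφcont.comp (continuous_const.prodMk continuous_id)
  have hφm : ∀ s : ℝ, Measurable (φ s) := fun s => (hφc s).measurable
  set T : X → X := φ t₀ with hTdef
  have hcomm : ∀ (s : ℝ) (x : X), T (φ s x) = φ s (T x) := by
    intro s x
    rw [hTdef, ← hadd, add_comm, hadd]
  have hcommk : ∀ (k : ℕ) (s : ℝ) (x : X), T^[k] (φ s x) = φ s (T^[k] x) := by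
    intro k
    induction k with
    | zero => simp
    | succ k ih =>
      intro s x
      rw [Function.iterate_succ_apply', Function.iterate_succ_apply', ih, hcomm]
  -- μ is invariant under T
  have hμT : MeasurePreserving T μ μ := by
    refine ⟨hφm t₀, ?_⟩
    refine Measure.ext fun A hA => ?_
    rw [Measure.map_apply (hφm t₀) hA, hμ _ (hA.preimage (hφm t₀)), hμ A hA]
    congr 1
    refine lintegral_congr fun s => ?_
    have h1 : φ s ⁻¹' (T ⁻¹' A) = T ⁻¹' (φ s ⁻¹' A) := by
      ext x; simp only [Set.mem_preimage, hcomm]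
    have h2 : ν (φ s ⁻¹' A) = ν (T ⁻¹' (φ s ⁻¹' A)) := by
      conv_lhs => rw [← hν]
      exact Measure.map_apply (hφm t₀) (hA.preimage (hφm s))
    rw [h1, ← h2]
  have hErg : Ergodic T μ := by
    refine ⟨hμT, ⟨fun A hA hTA => Filter.eventuallyConst_set'.mpr ?_⟩⟩
    rcases herg A hA hTA with h | h
    · exact Or.inl (ae_eq_empty.mpr h)
    · refine Or.inr ?_
      rw [ae_eq_univ]
      have hcpl := measure_compl hA (measure_ne_top μ A)
      rw [h, measure_univ, tsub_self] at hcpl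
      exact hcpl
  -- a bound for f
  obtain ⟨C, hC0, hC⟩ : ∃ C : ℝ, 0 ≤ C ∧ ∀ x, |f x| ≤ C := by
    let F : BoundedContinuousFunction X ℝ := BoundedContinuousFunction.mkOfCompact ⟨f, hf⟩
    exact ⟨‖F‖, norm_nonneg F, fun x => by
      simpa [F, Real.norm_eq_abs] using F.norm_coe_le_norm x⟩
  -- pointwise Birkhoff averages
  set Birk : (X → ℝ) → ℕ → X → ℝ :=
    fun h n x => (n : ℝ)⁻¹ * ∑ k ∈ Finset.range n, h (T^[k] x) with hBirkdef
  have hBirkm : ∀ n, Measurable (Birk f n) := by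
    intro n
    exact (Finset.measurable_sum _ fun k _ =>
      hf.measurable.comp ((hφm t₀).iterate k)).const_mul _
  have hBirk_bound : ∀ (n : ℕ) (x : X), |Birk f n x| ≤ C := by
    intro n x
    rcases Nat.eq_zero_or_pos n with rfl | hn
    · simpa [hBirkdef] using hC0
    have hn' : (0:ℝ) < n := by exact_mod_cast hn
    calc |Birk f n x| ≤ (n : ℝ)⁻¹ * ∑ k ∈ Finset.range n, |f (T^[k] x)| := by
          rw [hBirkdef]
          simp only []
          rw [abs_mul, abs_inv, Nat.abs_cast]
          exact mul_le_mul_of_nonneg_left (Finset.abs_sum_le_sum_abs _ _) (by positivity)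
      _ ≤ (n : ℝ)⁻¹ * ∑ k ∈ Finset.range n, C := by
          gcongr with k hk
          exact hC _
      _ = C := by
          rw [Finset.sum_const, Finset.card_range, nsmul_eq_mul,
            inv_mul_cancel_left₀ hn'.ne']
  -- integral of a Birkhoff average w.r.t. an invariant probability measure
  have hintBirk : ∀ (m : Measure X), IsProbabilityMeasure m → Measure.map T m = m →
      ∀ (h : X → ℝ), Continuous h → ∀ n : ℕ, 1 ≤ n →
      ∫ x, Birk h n x ∂m = ∫ x, h x ∂m := by
    intro m hmP hm h hh n hn
    haveI := hmP
    have hintk : ∀ k : ℕ, ∫ x, h (T^[k] x) ∂m = ∫ x, h x ∂m := by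
      intro k
      have hmk : Measure.map T^[k] m = m := (MeasurePreserving.iterate ⟨hφm t₀, hm⟩ k).map_eq
      calc ∫ x, h (T^[k] x) ∂m = ∫ y, h y ∂(Measure.map T^[k] m) :=
            (integral_map ((hφm t₀).iterate k).aemeasurable hh.aestronglyMeasurable).symm
        _ = ∫ x, h x ∂m := by rw [hmk]
    have hn' : (0:ℝ) < n := by exact_mod_cast hn
    calc (∫ x, Birk h n x ∂m)
        = (n : ℝ)⁻¹ * ∫ x, ∑ k ∈ Finset.range n, h (T^[k] x) ∂m := by
          rw [hBirkdef]; exact integral_const_mul _ _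
      _ = (n : ℝ)⁻¹ * ∑ k ∈ Finset.range n, ∫ x, h (T^[k] x) ∂m := by
          rw [integral_finset_sum _ fun k _ =>
            ((cont_integrable m (hh.comp ((hφc t₀).iterate k))) :
              Integrable (fun x => h (T^[k] x)) m)]
      _ = (n : ℝ)⁻¹ * ∑ k ∈ Finset.range n, ∫ x, h x ∂m := by
          congr 1
          exact Finset.sum_congr rfl fun k _ => hintk k
      _ = ∫ x, h x ∂m := by
          rw [Finset.sum_const, Finset.card_range, nsmul_eq_mul,
            inv_mul_cancel_left₀ hn'.ne']
  -- Hilbert space / von Neumann mean ergodic theorem setup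
  haveI : Fact ((1:ℝ≥0∞) ≤ 2) := ⟨one_le_two⟩
  have hf2 : MemLp f 2 μ :=
    MemLp.of_bound hf.aestronglyMeasurable C
      (Filter.Eventually.of_forall fun x => by simpa [Real.norm_eq_abs] using hC x)
  set x₀ : Lp ℝ 2 μ := hf2.toLp f with hx₀def
  set U : Lp ℝ 2 μ →L[ℝ] Lp ℝ 2 μ :=
    (MeasureTheory.Lp.compMeasurePreservingₗᵢ (E := ℝ) (p := 2) ℝ T hμT).toContinuousLinearMap
    with hUdef
  have hconv := U.tendsto_birkhoffAverage_orthogonalProjection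
    (LinearIsometry.norm_toContinuousLinearMap_le _) x₀
  obtain ⟨Lsub, hLsub⟩ :
      ∃ y : LinearMap.eqLocus (↑U : Lp ℝ 2 μ →ₗ[ℝ] Lp ℝ 2 μ) 1,
        Tendsto (fun n => birkhoffAverage ℝ (⇑U) _root_.id n x₀) atTop (𝓝 ↑y) := ⟨_, hconv⟩
  set L : Lp ℝ 2 μ := (Lsub : Lp ℝ 2 μ) with hLdef
  have hfixL : U L = L := by
    have h := LinearMap.mem_eqLocus.mp Lsub.2
    simpa using h
  have hLT : (L : X → ℝ) ∘ T =ᵐ[μ] (L : X → ℝ) := by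
    have h1 : (Lp.compMeasurePreserving T hμT L : X → ℝ) =ᵐ[μ] (L : X → ℝ) ∘ T :=
      Lp.coeFn_compMeasurePreserving L hμT
    have h2 : Lp.compMeasurePreserving T hμT L = L := hfixL
    rw [h2] at h1
    exact h1.symm
  obtain ⟨c, hc⟩ := hErg.ae_eq_const_of_ae_eq_comp_ae (Lp.aestronglyMeasurable L) hLT
  -- identify the Birkhoff averages in `Lp` with the pointwise ones
  have hUiter : ∀ k : ℕ, ((⇑U)^[k] x₀ : X → ℝ) =ᵐ[μ] fun x => f (T^[k] x) := by
    intro k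
    induction k with
    | zero => simpa using hf2.coeFn_toLp
    | succ k ih =>
      rw [Function.iterate_succ_apply']
      have h1 : (U ((⇑U)^[k] x₀) : X → ℝ) =ᵐ[μ] ((((⇑U)^[k] x₀ : Lp ℝ 2 μ) : X → ℝ)) ∘ T :=
        Lp.coeFn_compMeasurePreserving _ hμT
      refine h1.trans ?_
      have h2 := hμT.quasiMeasurePreserving.ae_eq ih
      refine h2.trans ?_
      refine Filter.EventuallyEq.of_eq (funext fun x => ?_)
      simp [Function.comp, Function.iterate_succ_apply]
  have hsum : ∀ n : ℕ, ((∑ k ∈ Finset.range n, (⇑U)^[k] x₀ : Lp ℝ 2 μ) : X → ℝ)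
      =ᵐ[μ] fun x => ∑ k ∈ Finset.range n, f (T^[k] x) := by
    intro n
    induction n with
    | zero =>
      simp only [Finset.range_zero, Finset.sum_empty]
      exact Lp.coeFn_zero ℝ 2 μ
    | succ n ih =>
      rw [Finset.sum_range_succ]
      refine (Lp.coeFn_add _ _).trans ?_
      filter_upwards [ih, hUiter n] with x h1 h2
      simp only [Pi.add_apply, h1, h2, Finset.sum_range_succ]
  have hBA : ∀ n : ℕ, ((birkhoffAverage ℝ (⇑U) _root_.id n x₀ : Lp ℝ 2 μ) : X → ℝ)
      =ᵐ[μ] Birk f n := by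
    intro n
    have hrepr : birkhoffAverage ℝ (⇑U) _root_.id n x₀
        = (n : ℝ)⁻¹ • ∑ k ∈ Finset.range n, (⇑U)^[k] x₀ := by
      simp [birkhoffAverage, birkhoffSum]
    rw [hrepr]
    refine (Lp.coeFn_smul _ _).trans ?_
    filter_upwards [hsum n] with x hx
    simp only [Pi.smul_apply, hx, smul_eq_mul, hBirkdef]
  have hTIM : TendstoInMeasure μ
      (fun n => ((birkhoffAverage ℝ (⇑U) _root_.id n x₀ : Lp ℝ 2 μ) : X → ℝ))
      atTop (L : X → ℝ) := tendstoInMeasure_of_tendsto_Lp hLsub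
  obtain ⟨ns, hns_mono, hns_ae⟩ := hTIM.exists_seq_tendsto_ae
  -- almost-everywhere convergence of pointwise Birkhoff averages to the constant c
  have hBAall : ∀ᵐ x ∂μ, ∀ n : ℕ,
      ((birkhoffAverage ℝ (⇑U) _root_.id n x₀ : Lp ℝ 2 μ) : X → ℝ) x = Birk f n x :=
    ae_all_iff.mpr hBA
  have haeG : ∀ᵐ x ∂μ, Tendsto (fun i => Birk f (ns i) x) atTop (𝓝 c) := by
    filter_upwards [hns_ae, hBAall, hc] with x h1 h2 h3
    have h4 : Tendsto (fun i =>
        ((birkhoffAverage ℝ (⇑U) _root_.id (ns i) x₀ : Lp ℝ 2 μ) : X → ℝ) x) atTop (𝓝 c) := by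
      rwa [h3] at h1
    exact h4.congr fun i => h2 (ns i)
  set G : Set X := {x | Tendsto (fun i => Birk f (ns i) x) atTop (𝓝 c)} with hGdef
  have hGm : MeasurableSet G :=
    measurableSet_tendsto_fun (fun i => hBirkm (ns i)) measurable_const
  have hGc0 : μ Gᶜ = 0 := ae_iff.mp haeG
  -- G is strictly invariant under T
  have hshift : ∀ (n : ℕ) (x : X),
      Birk f n (T x) = Birk f n x + (n : ℝ)⁻¹ * (f (T^[n] x) - f x) := by
    intro n x
    have hsum' : ∑ k ∈ Finset.range n, f (T^[k] (T x))
        = (∑ k ∈ Finset.range n, f (T^[k] x)) + (f (T^[n] x) - f x) := by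
      have h1 : ∀ k : ℕ, f (T^[k] (T x)) = f (T^[k+1] x) := fun k => by
        rw [← Function.iterate_succ_apply]
      have h2 := Finset.sum_range_succ' (fun k => f (T^[k] x)) n
      have h3 := Finset.sum_range_succ (fun k => f (T^[k] x)) n
      calc ∑ k ∈ Finset.range n, f (T^[k] (T x)) = ∑ k ∈ Finset.range n, f (T^[k+1] x) :=
            Finset.sum_congr rfl fun k _ => h1 k
        _ = (∑ k ∈ Finset.range n, f (T^[k] x)) + (f (T^[n] x) - f x) := by
            rw [h3] at h2
            simp only [Function.iterate_zero, id_eq] at h2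
            linarith
    simp only [hBirkdef]
    rw [hsum']
    ring
  have htail : ∀ x : X,
      Tendsto (fun i => ((ns i : ℝ))⁻¹ * (f (T^[ns i] x) - f x)) atTop (𝓝 0) := by
    intro x
    have h1 : Tendsto (fun i => ((ns i : ℝ))⁻¹) atTop (𝓝 0) :=
      tendsto_inv_atTop_nhds_zero_nat.comp hns_mono.tendsto_atTop
    have h2 : Tendsto (fun i => ((ns i : ℝ))⁻¹ * (2 * C)) atTop (𝓝 0) := by
      simpa using h1.mul_const (2 * C)
    refine squeeze_zero_norm (fun i => ?_) h2
    rw [Real.norm_eq_abs, abs_mul, abs_inv, Nat.abs_cast]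
    refine mul_le_mul_of_nonneg_left ?_ (by positivity)
    calc |f (T^[ns i] x) - f x| ≤ |f (T^[ns i] x)| + |f x| := abs_sub _ _
      _ ≤ C + C := add_le_add (hC _) (hC _)
      _ = 2 * C := by ring
  have hGinv : T ⁻¹' G = G := by
    ext x
    simp only [Set.mem_preimage, hGdef, Set.mem_setOf_eq]
    constructor
    · intro h
      have h2 : (fun i => Birk f (ns i) (T x) - ((ns i : ℝ))⁻¹ * (f (T^[ns i] x) - f x))
          = fun i => Birk f (ns i) x := funext fun i => by rw [hshift]; ring
      have h3 := h.sub (htail x)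
      rw [h2, sub_zero] at h3
      exact h3
    · intro h
      have h3 := h.add (htail x)
      rw [add_zero] at h3
      exact h3.congr fun i => (hshift (ns i) x).symm
  -- the constant c is the μ-integral of f
  have hcμ : c = ∫ x, f x ∂μ := by
    have hdom : Tendsto (fun i => ∫ x, Birk f (ns i) x ∂μ) atTop (𝓝 (∫ _x, c ∂μ)) := by
      refine tendsto_integral_of_dominated_convergence (fun _ => C)
        (fun i => (hBirkm (ns i)).aestronglyMeasurable) (integrable_const C)
        (fun i => Filter.Eventually.of_forall fun x => ?_) haeG
      simpa [Real.norm_eq_abs] using hBirk_bound (ns i) x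
    have heq : (fun i => ∫ x, Birk f (ns i) x ∂μ) =ᶠ[atTop] fun _ => ∫ x, f x ∂μ := by
      filter_upwards [hns_mono.tendsto_atTop.eventually_ge_atTop 1] with i hi
      exact hintBirk μ inferInstance hμT.map_eq f hf (ns i) hi
    have h2 : Tendsto (fun _ : ℕ => ∫ x, f x ∂μ) atTop (𝓝 (∫ _x, c ∂μ)) := hdom.congr' heq
    have h3 : (∫ x, f x ∂μ) = ∫ _x, c ∂μ := tendsto_nhds_unique tendsto_const_nhds h2
    rw [h3]
    simp
  -- transfer to ν via the defining formula for μ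
  have hμGc := hμ Gᶜ hGm.compl
  rw [hGc0] at hμGc
  have hlint0 : ∫⁻ s in Set.Ioc (0:ℝ) t₀, ν (φ s ⁻¹' Gᶜ) = 0 := by
    rcases mul_eq_zero.mp hμGc.symm with h | h
    · exfalso
      rw [ENNReal.ofReal_eq_zero] at h
      have : (0:ℝ) < 1 / t₀ := by positivity
      linarith
    · exact h
  have hsm : Measurable fun s : ℝ => ν (φ s ⁻¹' Gᶜ) := by
    have hS : MeasurableSet ((fun p : ℝ × X => φ p.1 p.2) ⁻¹' Gᶜ) :=
      hφcont.measurable hGm.compl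
    exact measurable_measure_prodMk_left hS
  have hae_s : ∀ᵐ s ∂(volume.restrict (Set.Ioc (0:ℝ) t₀)), ν (φ s ⁻¹' Gᶜ) = 0 :=
    (lintegral_eq_zero_iff hsm).mp hlint0
  -- for every time s with ν(φ_s⁻¹ Gᶜ) = 0, the ν-integral of f ∘ φ_s equals c
  have hgood : ∀ s : ℝ, ν (φ s ⁻¹' Gᶜ) = 0 → ∫ x, f (φ s x) ∂ν = c := by
    intro s hs0
    have haeν : ∀ᵐ x ∂ν, φ s x ∈ G := by
      rw [ae_iff]
      exact hs0
    have hdom2 : Tendsto (fun i => ∫ x, Birk f (ns i) (φ s x) ∂ν) atTop (𝓝 (∫ _x, c ∂ν)) := by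
      refine tendsto_integral_of_dominated_convergence (fun _ => C)
        (fun i => ((hBirkm (ns i)).comp (hφm s)).aestronglyMeasurable) (integrable_const C)
        (fun i => Filter.Eventually.of_forall fun x => ?_) (haeν.mono fun x hx => hx)
      simpa [Real.norm_eq_abs] using hBirk_bound (ns i) (φ s x)
    have heq2 : (fun i => ∫ x, Birk f (ns i) (φ s x) ∂ν)
        =ᶠ[atTop] fun _ => ∫ x, f (φ s x) ∂ν := by
      filter_upwards [hns_mono.tendsto_atTop.eventually_ge_atTop 1] with i hi
      have hcomp : (fun x => Birk f (ns i) (φ s x)) = Birk (fun y => f (φ s y)) (ns i) := by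
        funext x
        simp only [hBirkdef]
        congr 1
        exact Finset.sum_congr rfl fun k _ => by rw [hcommk]
      rw [hcomp]
      exact hintBirk ν inferInstance hν (fun y => f (φ s y)) (hf.comp (hφc s)) (ns i) hi
    have h2 : Tendsto (fun _ : ℕ => ∫ x, f (φ s x) ∂ν) atTop (𝓝 (∫ _x, c ∂ν)) :=
      hdom2.congr' heq2
    have h3 : (∫ x, f (φ s x) ∂ν) = ∫ _x, c ∂ν := tendsto_nhds_unique tendsto_const_nhds h2
    rw [h3]
    simp
  -- the ν-average function of f along the flow
  set gI : ℝ → ℝ := fun s => ∫ x, f (φ s x) ∂ν with hgIdef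
  have hgcont : Continuous gI := by
    rw [continuous_iff_seqContinuous]
    intro u s hu
    have : Tendsto (fun n => ∫ x, f (φ (u n) x) ∂ν) atTop (𝓝 (∫ x, f (φ s x) ∂ν)) := by
      refine tendsto_integral_of_dominated_convergence (fun _ => C)
        (fun n => (hf.comp (hφc (u n))).aestronglyMeasurable) (integrable_const C)
        (fun n => Filter.Eventually.of_forall fun x => by
          simpa [Real.norm_eq_abs] using hC (φ (u n) x))
        (Filter.Eventually.of_forall fun x => ?_)
      have h1 : Tendsto (fun n => ((u n : ℝ), x)) atTop (𝓝 (s, x)) :=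
        hu.prodMk_nhds tendsto_const_nhds
      exact ((hf.comp hφcont).continuousAt).tendsto.comp h1
    exact this
  have hnullIoo : volume ({s : ℝ | gI s ≠ c} ∩ Set.Ioo 0 t₀) = 0 := by
    have hsub : {s : ℝ | gI s ≠ c} ∩ Set.Ioo 0 t₀
        ⊆ {s : ℝ | ¬ (s ∈ Set.Ioc (0:ℝ) t₀ → ν (φ s ⁻¹' Gᶜ) = 0)} := by
      rintro s ⟨hgs, hIoo⟩
      intro hcontra
      exact hgs (hgood s (hcontra (Set.Ioo_subset_Ioc_self hIoo)))
    refine measure_mono_null hsub ?_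
    exact ae_iff.mp ((ae_restrict_iff' measurableSet_Ioc).mp hae_s)
  have hIoo_eq : ∀ s ∈ Set.Ioo (0:ℝ) t₀, gI s = c := by
    intro s hs
    by_contra hne
    have hopen : IsOpen ({s : ℝ | gI s ≠ c} ∩ Set.Ioo 0 t₀) :=
      ((isClosed_eq hgcont continuous_const).isOpen_compl).inter isOpen_Ioo
    have hempty := hopen.eq_empty_of_measure_zero hnullIoo
    rw [Set.eq_empty_iff_forall_notMem] at hempty
    exact hempty s ⟨hne, hs⟩
  have hIcc : ∀ s ∈ Set.Icc (0:ℝ) t₀, gI s = c := by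
    intro s hs
    have hclosed : IsClosed {s : ℝ | gI s = c} := isClosed_eq hgcont continuous_const
    have h2 : closure (Set.Ioo (0:ℝ) t₀) ⊆ {s : ℝ | gI s = c} :=
      closure_minimal (fun u hu => hIoo_eq u hu) hclosed
    have h1 : s ∈ closure (Set.Ioo (0:ℝ) t₀) := by
      rw [closure_Ioo ht₀.ne]
      exact hs
    exact h2 h1
  have hper : Function.Periodic gI t₀ := by
    intro s
    have h1 : gI (s + t₀) = ∫ x, (fun y => f (φ s y)) (φ t₀ x) ∂ν := by
      simp only [hgIdef, hadd]
    rw [h1]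
    calc ∫ x, (fun y => f (φ s y)) (φ t₀ x) ∂ν
        = ∫ y, f (φ s y) ∂(Measure.map (φ t₀) ν) :=
          (integral_map (hφm t₀).aemeasurable
            ((hf.comp (hφc s)).aestronglyMeasurable)).symm
      _ = gI s := by rw [hν]
  intro s
  obtain ⟨m, hm, -⟩ := existsUnique_add_zsmul_mem_Ioc ht₀ s (0:ℝ)
  have h1 : gI (s + m • t₀) = gI s := (hper.zsmul m) s
  have h2 : gI (s + m • t₀) = c := by
    refine hIcc _ (Set.Ioc_subset_Icc_self ?_)
    simpa using hm
  show gI s = ∫ x, f x ∂μ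
  rw [← h1, h2, hcμ]

/-- Let `φ` be a continuous flow on a compact metric space `X`, `t₀ > 0`,
`ν` a Borel probability measure invariant under the time-`t₀` map, and `μ` the Borel
probability measure `μ(A) = (1/t₀) ∫₀^{t₀} ν(φ_s⁻¹ A) ds`. If `μ` is ergodic for the
time-`t₀` map (every Borel set `A` with `φ_{t₀}⁻¹ A = A` has `μ A ∈ {0,1}`), then
`(φ_s)_* ν = μ` for every `s ∈ ℝ`; in particular `ν = μ`. -/
theorem flow_average_ergodic_unique
    {X : Type*} [MetricSpace X] [CompactSpace X] [MeasurableSpace X] [BorelSpace X]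
    (φ : ℝ → X → X) (hφcont : Continuous fun p : ℝ × X => φ p.1 p.2)
    (h0 : ∀ x, φ 0 x = x) (hadd : ∀ s t : ℝ, ∀ x, φ (s + t) x = φ s (φ t x))
    (t₀ : ℝ) (ht₀ : 0 < t₀)
    (ν : Measure X) [IsProbabilityMeasure ν]
    (hν : Measure.map (φ t₀) ν = ν)
    (μ : Measure X) [IsProbabilityMeasure μ]
    (hμ : ∀ A : Set X, MeasurableSet A →
      μ A = ENNReal.ofReal (1 / t₀) * ∫⁻ s in Set.Ioc (0 : ℝ) t₀, ν (φ s ⁻¹' A))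
    (herg : ∀ A : Set X, MeasurableSet A → φ t₀ ⁻¹' A = A → μ A = 0 ∨ μ A = 1) :
    (∀ s : ℝ, Measure.map (φ s) ν = μ) ∧ ν = μ := by
  have hφc : ∀ s : ℝ, Continuous (φ s) := fun s =>
    hφcont.comp (continuous_const.prodMk continuous_id)
  have hφm : ∀ s : ℝ, Measurable (φ s) := fun s => (hφc s).measurable
  have key := flow_aux φ hφcont hadd t₀ ht₀ ν hν μ hμ herg
  have first : ∀ s : ℝ, Measure.map (φ s) ν = μ := by
    intro s
    haveI : IsProbabilityMeasure (Measure.map (φ s) ν) :=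
      Measure.isProbabilityMeasure_map (hφm s).aemeasurable
    refine ext_of_forall_lintegral_eq_of_IsFiniteMeasure fun F => ?_
    have hFc : Continuous fun x => ((F x : ℝ≥0) : ℝ) :=
      NNReal.continuous_coe.comp F.continuous
    have hFm : Measurable fun x => ((F x : ℝ≥0) : ℝ≥0∞) :=
      F.continuous.measurable.coe_nnreal_ennreal
    rw [lintegral_map hFm (hφm s)]
    calc ∫⁻ x, (F (φ s x) : ℝ≥0∞) ∂ν
        = ENNReal.ofReal (∫ x, ((F (φ s x) : ℝ≥0) : ℝ) ∂ν) :=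
          lintegral_coe_eq_integral _ (cont_integrable ν (hFc.comp (hφc s)))
      _ = ENNReal.ofReal (∫ x, ((F x : ℝ≥0) : ℝ) ∂μ) := by
          rw [key (fun x => ((F x : ℝ≥0) : ℝ)) hFc s]
      _ = ∫⁻ x, (F x : ℝ≥0∞) ∂μ := (lintegral_coe_eq_integral _ (cont_integrable μ hFc)).symm
  refine ⟨first, ?_⟩
  have h00 := first 0
  rwa [show φ 0 = id from funext h0, Measure.map_id] at h00
end
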